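/- Let G be a finite simple graph with a valid tree partition (T, β), and let {u, v} be an edge of G with u ∈ β(s) and v ∈ β(t) for nodes s, t of T. Then, in T, either s is an ancestor of t or t is an ancestor of s. -/
import Mathlib


/-- In a tree `T` rooted at `r`, the node `a` is an ancestor of `b` if `a` lies on the
unique path from `r` to `b`; equivalently, distances satisfy
`dist r a + dist a b = dist r b`. -/
def Ancestor {ι : Type*} (T : SimpleGraph ι) (r a b : ι) : Prop :=
  T.dist r a + T.dist a b = T.dist r b

/-- `Bag T r β s` is the vertex set of `G_s`: the union of `β t` over all descendants `t`
of `s` (including `s` itself) in the tree `T` rooted at `r`. -/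
def Bag {V ι : Type*} (T : SimpleGraph ι) (r : ι) (β : ι → Set V) (s : ι) : Set V :=
  ⋃ t ∈ {t | Ancestor T r s t}, β t

/-- `(T, β)` (with `T` rooted at `r`) is a valid tree partition of the graph `G`:
`T` is a tree, the sets `β s` are nonempty and partition `V(G)`, and moreover
(1) each `β s` induces a clique or a `P₃`;
(2) each `β s` dominates `G_s` (whose vertex set is `Bag T r β s`);
(3) for each `s`, the connected components of `G_s - β s` are exactly the graphs `G_t`
for the children `t` of `s` (expressed as: two vertices of `G_s - β s` are reachable in
`G_s - β s` if and only if they both lie in `G_t` for some child `t` of `s`). -/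
def IsValidTreePartition {V ι : Type*} (G : SimpleGraph V) (T : SimpleGraph ι) (r : ι)
    (β : ι → Set V) : Prop :=
  T.IsTree ∧
  (∀ s, (β s).Nonempty) ∧
  (∀ v : V, ∃! s, v ∈ β s) ∧
  (∀ s, G.IsClique (β s) ∨ Nonempty (G.induce (β s) ≃g SimpleGraph.pathGraph 3)) ∧
  (∀ s, ∀ v ∈ Bag T r β s, v ∈ β s ∨ ∃ u ∈ β s, G.Adj u v) ∧
  (∀ s, ∀ u v : ↥(Bag T r β s \ β s),
      ((G.induce (Bag T r β s \ β s)).Reachable u v ↔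
        ∃ t, T.Adj s t ∧ Ancestor T r s t ∧ (u : V) ∈ Bag T r β t ∧ (v : V) ∈ Bag T r β t))

/-- If `G` has a valid tree partition `(T, β)` rooted at `r`, and `{u, v}` is an edge of
`G` with `u ∈ β s` and `v ∈ β t`, then in `T` either `s` is an ancestor of `t`, or `t` is
an ancestor of `s`. -/
theorem edge_endpoints_ancestor_related {V ι : Type*} [Fintype V] [Fintype ι]
    (G : SimpleGraph V) (T : SimpleGraph ι) (r : ι) (β : ι → Set V)
    (h : IsValidTreePartition G T r β) {u v : V} (huv : G.Adj u v)
    {s t : ι} (hu : u ∈ β s) (hv : v ∈ β t) :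
    Ancestor T r s t ∨ Ancestor T r t s := by
  obtain ⟨htree, hne, huniq, hcl, hdom, hcomp⟩ := h
  have hconn := htree.isConnected
  have htrans : ∀ a b c : ι, Ancestor T r a b → Ancestor T r b c → Ancestor T r a c := by
    intro a b c h1 h2
    have t1 := hconn.dist_triangle (u := a) (v := b) (w := c)
    have t2 := hconn.dist_triangle (u := r) (v := a) (w := c)
    unfold Ancestor at *
    omega
  suffices H : ∀ n w, T.dist r s - T.dist r w ≤ n → Ancestor T r w s → Ancestor T r w t →
      Ancestor T r s t ∨ Ancestor T r t s by
    have hr : ∀ x, Ancestor T r r x := by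
      intro x; unfold Ancestor; rw [SimpleGraph.dist_self]; omega
    exact H (T.dist r s) r (by omega) (hr s) (hr t)
  intro n
  induction n with
  | zero =>
    intro w hle hws hwt
    have h0 : T.dist w s = 0 := by unfold Ancestor at hws; omega
    have : w = s := (hconn.dist_eq_zero_iff).mp h0
    subst this
    exact Or.inl hwt
  | succ n ih =>
    intro w hle hws hwt
    by_cases hws' : w = s
    · subst hws'; exact Or.inl hwt
    by_cases hwt' : w = t
    · subst hwt'; exact Or.inr hws
    have huB : u ∈ Bag T r β w := Set.mem_biUnion hws hu
    have hvB : v ∈ Bag T r β w := Set.mem_biUnion hwt hv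
    have hunb : u ∉ β w := fun hmem => by
      obtain ⟨x, hx, hxu⟩ := huniq u
      exact hws' ((hxu w hmem).trans (hxu s hu).symm)
    have hvnb : v ∉ β w := fun hmem => by
      obtain ⟨x, hx, hxu⟩ := huniq v
      exact hwt' ((hxu w hmem).trans (hxu t hv).symm)
    have hadj : (G.induce (Bag T r β w \ β w)).Adj ⟨u, huB, hunb⟩ ⟨v, hvB, hvnb⟩ := huv
    obtain ⟨c, hadjwc, hanc, huc, hvc⟩ :=
      (hcomp w ⟨u, huB, hunb⟩ ⟨v, hvB, hvnb⟩).mp hadj.reachable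
    obtain ⟨x, hx, hxu⟩ := Set.mem_iUnion₂.mp huc
    have hxs : x = s := by
      obtain ⟨y, hy, hyu⟩ := huniq u
      exact ((hyu x hxu).trans (hyu s hu).symm)
    obtain ⟨y, hy, hyv⟩ := Set.mem_iUnion₂.mp hvc
    have hyt : y = t := by
      obtain ⟨z, hz, hzu⟩ := huniq v
      exact ((hzu y hyv).trans (hzu t hv).symm)
    have hcs : Ancestor T r c s := hxs ▸ hx
    have hct : Ancestor T r c t := hyt ▸ hy
    have hwc : T.dist r w < T.dist r c := by
      have hpos : 0 < T.dist w c := hconn.pos_dist_of_ne hadjwc.ne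
      unfold Ancestor at hanc
      omega
    have hcsle : T.dist r c ≤ T.dist r s := by unfold Ancestor at hcs; omega
    exact ih c (by omega) hcs hct
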